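/- arXiv:1509.05181 — 5 statements merged into one kernel-verified Lean document; each statement's English description precedes it below -/
import Mathlib

section
/- Suppose every agent's valuation v_i is multilinear in PoS. Then the PEV mechanism is ex-post truthful: for every efficient allocation choice π*, every family of pivot functions (h_i), every type profile θ = (θ_i)_{i∈N}, every agent i, and every report θ̂_i, one has EU_i(θ_i, θ_i, θ_{-i}) ≥ EU_i(θ_i, θ̂_i, θ_{-i}). -/
/-- A function `f : (N → ℝ) → ℝ` is multilinear on `[0,1]^N`. -/
def MultilinearOn {N : Type*} [Fintype N] [DecidableEq N] (f : (N → ℝ) → ℝ) : Prop :=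
  ∀ p : N → ℝ, (∀ j, 0 ≤ p j ∧ p j ≤ 1) → ∀ j,
    f p = p j * f (Function.update p j 1) + (1 - p j) * f (Function.update p j 0)

/-- A valuation `v : T → (N → ℝ) → ℝ` is multilinear in PoS. -/
def MultilinearInPoS {N T : Type*} [Fintype N] [DecidableEq N]
    (v : T → (N → ℝ) → ℝ) : Prop :=
  ∀ τ : T, MultilinearOn (v τ)

/-- A type of an agent: a valuation together with a probability-of-success function
with values in `[0,1]`. -/
structure AgentType (N T : Type*) where
  v : T → (N → ℝ) → ℝ
  p : T → ℝ
  hp : ∀ τ, 0 ≤ p τ ∧ p τ ≤ 1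

/-- The PoS profile `p^τ` of a type profile `θ` at allocation `τ`. -/
def PoSProfile {N T : Type*} (θ : N → AgentType N T) (τ : T) : N → ℝ :=
  fun j => (θ j).p τ

/-- The expected social welfare of allocation `τ` under type profile `θ`. -/
def SW {N T : Type*} [Fintype N] (θ : N → AgentType N T) (τ : T) : ℝ :=
  ∑ i, (θ i).v τ (PoSProfile θ τ)

/-- An efficient allocation choice function. -/
def Efficient {N T : Type*} [Fintype N] (π : (N → AgentType N T) → T) : Prop :=
  ∀ θ τ, SW θ τ ≤ SW θ (π θ)

/-- A family of pivot functions `h_i` depends only on the types of agents other than `i`. -/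
def PivotIndep {N T : Type*} (h : N → (N → AgentType N T) → ℝ) : Prop :=
  ∀ i θ θ', (∀ j, j ≠ i → θ j = θ' j) → h i θ = h i θ'

/-- Agent `i`'s expected utility in the PEV mechanism when her true type is `θ i`,
she reports `r`, and all other agents have true types `θ` and report truthfully. -/
noncomputable def EU {N T : Type*} [Fintype N] [DecidableEq N]
    (π : (N → AgentType N T) → T) (h : N → (N → AgentType N T) → ℝ)
    (θ : N → AgentType N T) (i : N) (r : AgentType N T) : ℝ :=
  let τ := π (Function.update θ i r)
  let q := PoSProfile θ τ
  (θ i).p τ *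
      ((θ i).v τ (Function.update q i 1) +
        ∑ j ∈ Finset.univ.erase i, (θ j).v τ (Function.update q i 1)) +
    (1 - (θ i).p τ) *
      ((θ i).v τ (Function.update q i 0) +
        ∑ j ∈ Finset.univ.erase i, (θ j).v τ (Function.update q i 0)) -
    h i θ

/-- if every agent's valuation is multilinear in PoS, then the PEV
mechanism is ex-post truthful. -/
theorem pev_ex_post_truthful {N T : Type*} [Fintype N] [DecidableEq N]
    [Fintype T] [Nonempty T]
    (π : (N → AgentType N T) → T) (hπ : Efficient π)
    (h : N → (N → AgentType N T) → ℝ) (hh : PivotIndep h)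
    (θ : N → AgentType N T) (hml : ∀ i, MultilinearInPoS ((θ i).v))
    (i : N) (r : AgentType N T) :
    EU π h θ i r ≤ EU π h θ i (θ i) := by
  have key : ∀ s : AgentType N T,
      EU π h θ i s = SW θ (π (Function.update θ i s)) - h i θ := by
    intro s
    unfold EU SW
    set τ := π (Function.update θ i s) with hτ
    set q := PoSProfile θ τ with hq
    have hq01 : ∀ j, 0 ≤ q j ∧ q j ≤ 1 := fun j => (θ j).hp τ
    have hml' : ∀ j, (θ j).v τ q
        = q i * (θ j).v τ (Function.update q i 1)
          + (1 - q i) * (θ j).v τ (Function.update q i 0) :=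
      fun j => hml j τ q hq01 i
    have hqi : q i = (θ i).p τ := rfl
    rw [show (∑ j, (θ j).v τ q)
        = ∑ j, (q i * (θ j).v τ (Function.update q i 1)
            + (1 - q i) * (θ j).v τ (Function.update q i 0)) from
      Finset.sum_congr rfl (fun j _ => hml' j)]
    rw [Finset.sum_add_distrib, ← Finset.mul_sum, ← Finset.mul_sum,
      ← Finset.add_sum_erase _ (fun j => (θ j).v τ (Function.update q i 1))
        (Finset.mem_univ i),
      ← Finset.add_sum_erase _ (fun j => (θ j).v τ (Function.update q i 0))
        (Finset.mem_univ i)]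
    rfl
  rw [key r, key (θ i), Function.update_eq_self]
  have := hπ θ (π (Function.update θ i r))
  linarith
end

section
/- Suppose every agent's valuation v_i is multilinear in PoS. Then for every efficient allocation choice π*, every family of pivot functions (h_i), every type profile θ, every agent i, and every report θ̂_i, agent i's expected utility equals the true expected social welfare of the chosen allocation minus the pivot term: EU_i(θ_i, θ̂_i, θ_{-i}) = SW(θ, π*(θ̂_i, θ_{-i})) - h_i(θ_{-i}). -/
/-- if every agent's valuation is multilinear in PoS, then in the PEV
mechanism agent `i`'s expected utility equals the true expected social welfare of the
chosen allocation minus the pivot term. -/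
theorem pev_eu_eq_sw_sub_pivot {N T : Type*} [Fintype N] [DecidableEq N]
    [Fintype T] [Nonempty T]
    (π : (N → AgentType N T) → T) (hπ : Efficient π)
    (h : N → (N → AgentType N T) → ℝ) (hh : PivotIndep h)
    (θ : N → AgentType N T) (hml : ∀ i, MultilinearInPoS ((θ i).v))
    (i : N) (r : AgentType N T) :
    EU π h θ i r = SW θ (π (Function.update θ i r)) - h i θ := by

  set τ := π (Function.update θ i r) with hτ
  have key : ∀ j : N, (θ j).v τ (PoSProfile θ τ) =
      (θ i).p τ * (θ j).v τ (Function.update (PoSProfile θ τ) i 1) +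
      (1 - (θ i).p τ) * (θ j).v τ (Function.update (PoSProfile θ τ) i 0) := by
    intro j
    have := hml j τ (PoSProfile θ τ) (fun k => (θ k).hp τ) i
    simpa [PoSProfile] using this
  have hsum : SW θ τ =
      (θ i).p τ * ((θ i).v τ (Function.update (PoSProfile θ τ) i 1) +
        ∑ j ∈ Finset.univ.erase i, (θ j).v τ (Function.update (PoSProfile θ τ) i 1)) +
      (1 - (θ i).p τ) * ((θ i).v τ (Function.update (PoSProfile θ τ) i 0) +
        ∑ j ∈ Finset.univ.erase i, (θ j).v τ (Function.update (PoSProfile θ τ) i 0)) := by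
    rw [SW]
    rw [← Finset.add_sum_erase _ _ (Finset.mem_univ i)]
    simp only [key, Finset.sum_add_distrib, ← Finset.mul_sum]
    ring
  simp only [EU]
  rw [hsum]
end

section
/- Suppose every agent's valuation v_i is multilinear in PoS and every aggregation function f_i τ is multilinear on [0,1]^N. Then the trust-based PEV mechanism M^trust is ex-post truthful: for every efficient allocation choice π*, every family of pivot functions (h_i), every type profile θ, every agent i, and every report θ̂_i, EU_i(θ_i, θ_i, θ_{-i}) ≥ EU_i(θ_i, θ̂_i, θ_{-i}). -/
/-- A type of an agent in the trust setting: a valuation together with a trust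
report `t`, where `t τ j ∈ [0,1]` is the opinion of agent `j`'s probability of
successfully completing `j`'s tasks in `τ`. -/
structure TrustAgentType (N T : Type*) where
  v : T → (N → ℝ) → ℝ
  t : T → N → ℝ
  ht : ∀ τ j, 0 ≤ t τ j ∧ t τ j ≤ 1

/-- The aggregated (true) PoS profile `ρ^τ`: coordinate `i` aggregates, via `f i τ`,
all agents' opinions about agent `i` for allocation `τ`. -/
def rho {N T : Type*} (f : N → T → (N → ℝ) → ℝ)
    (θ : N → TrustAgentType N T) (τ : T) : N → ℝ :=
  fun i => f i τ (fun j => (θ j).t τ i)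

/-- The expected social welfare of allocation `τ` under type profile `θ`, with
aggregation functions `f`. -/
def TSW {N T : Type*} [Fintype N] (f : N → T → (N → ℝ) → ℝ)
    (θ : N → TrustAgentType N T) (τ : T) : ℝ :=
  ∑ i, (θ i).v τ (rho f θ τ)

/-- An efficient allocation choice function in the trust setting. -/
def TEfficient {N T : Type*} [Fintype N] (f : N → T → (N → ℝ) → ℝ)
    (π : (N → TrustAgentType N T) → T) : Prop :=
  ∀ θ τ, TSW f θ τ ≤ TSW f θ (π θ)

/-- A family of pivot functions `h_i` depends only on the types of agents other
than `i`. -/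
def TPivotIndep {N T : Type*} (h : N → (N → TrustAgentType N T) → ℝ) : Prop :=
  ∀ i θ θ', (∀ j, j ≠ i → θ j = θ' j) → h i θ = h i θ'

/-- Agent `i`'s expected utility in the trust-based PEV mechanism `M^trust` when her
true type is `θ i`, she reports `r`, and all other agents have true types `θ` and
report truthfully. -/
noncomputable def TEU {N T : Type*} [Fintype N] [DecidableEq N]
    (f : N → T → (N → ℝ) → ℝ) (π : (N → TrustAgentType N T) → T)
    (h : N → (N → TrustAgentType N T) → ℝ)
    (θ : N → TrustAgentType N T) (i : N) (r : TrustAgentType N T) : ℝ :=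
  let τ := π (Function.update θ i r)
  let ρ := rho f θ τ
  ρ i *
      ((θ i).v τ (Function.update ρ i 1) +
        ∑ j ∈ Finset.univ.erase i, (θ j).v τ (Function.update ρ i 1)) +
    (1 - ρ i) *
      ((θ i).v τ (Function.update ρ i 0) +
        ∑ j ∈ Finset.univ.erase i, (θ j).v τ (Function.update ρ i 0)) -
    h i θ

/-- if every agent's valuation is multilinear in PoS and every
aggregation function `f i τ` is multilinear on `[0,1]^N`, then the trust-based PEV
mechanism `M^trust` is ex-post truthful. -/
theorem trust_pev_ex_post_truthful {N T : Type*} [Fintype N] [DecidableEq N]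
    [Fintype T] [Nonempty T]
    (f : N → T → (N → ℝ) → ℝ)
    (hf01 : ∀ (i : N) (τ : T) (q : N → ℝ), (∀ j, 0 ≤ q j ∧ q j ≤ 1) →
      0 ≤ f i τ q ∧ f i τ q ≤ 1)
    (hfml : ∀ (i : N) (τ : T), MultilinearOn (f i τ))
    (π : (N → TrustAgentType N T) → T) (hπ : TEfficient f π)
    (h : N → (N → TrustAgentType N T) → ℝ) (hh : TPivotIndep h)
    (θ : N → TrustAgentType N T) (hml : ∀ i, MultilinearInPoS ((θ i).v))
    (i : N) (r : TrustAgentType N T) :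
    TEU f π h θ i r ≤ TEU f π h θ i (θ i) := by
  have key : ∀ τ : T,
      (rho f θ τ) i *
          ((θ i).v τ (Function.update (rho f θ τ) i 1) +
            ∑ j ∈ Finset.univ.erase i, (θ j).v τ (Function.update (rho f θ τ) i 1)) +
        (1 - (rho f θ τ) i) *
          ((θ i).v τ (Function.update (rho f θ τ) i 0) +
            ∑ j ∈ Finset.univ.erase i, (θ j).v τ (Function.update (rho f θ τ) i 0))
      = TSW f θ τ := by
    intro τ
    have hρ : ∀ j, 0 ≤ rho f θ τ j ∧ rho f θ τ j ≤ 1 := fun j =>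
      hf01 j τ (fun k => (θ k).t τ j) (fun k => (θ k).ht τ j)
    have h1 : ∀ j : N, (θ j).v τ (rho f θ τ) =
        rho f θ τ i * (θ j).v τ (Function.update (rho f θ τ) i 1) +
        (1 - rho f θ τ i) * (θ j).v τ (Function.update (rho f θ τ) i 0) :=
      fun j => hml j τ _ hρ i
    rw [TSW, Finset.sum_congr rfl (fun j _ => h1 j), Finset.sum_add_distrib,
      ← Finset.mul_sum, ← Finset.mul_sum,
      ← Finset.add_sum_erase _ _ (Finset.mem_univ i),
      ← Finset.add_sum_erase _ (fun j => (θ j).v τ (Function.update (rho f θ τ) i 0))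
        (Finset.mem_univ i)]
  have hself : Function.update θ i (θ i) = θ := Function.update_eq_self i θ
  unfold TEU
  simp only [hself]
  rw [key (π (Function.update θ i r)), key (π θ)]
  exact sub_le_sub_right (hπ θ (π (Function.update θ i r))) _
end

section
/- Let ι and κ be finite types, j₀ ∈ ι, let f : (ι → ℝ) → ℝ be multilinear on [0,1]^ι, and let g : (κ → ℝ) → ℝ be multilinear on [0,1]^κ with 0 ≤ g q ≤ 1 whenever 0 ≤ q k ≤ 1 for all k. Define F : ((ι ⊕ κ) → ℝ) → ℝ by F r = f (Function.update (r ∘ Sum.inl) j₀ (g (r ∘ Sum.inr))), i.e., F is obtained from f by substituting the multilinear function g (in a disjoint set of variables) for the variable j₀. Then F is multilinear on [0,1]^{ι ⊕ κ}. -/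
/-- substituting a `[0,1]`-valued multilinear function `g` (in a disjoint
set of variables) for one variable of a multilinear function `f` yields a multilinear
function. -/
theorem multilinear_subst {ι κ : Type*} [Fintype ι] [DecidableEq ι]
    [Fintype κ] [DecidableEq κ] (j₀ : ι)
    (f : (ι → ℝ) → ℝ) (hf : MultilinearOn f)
    (g : (κ → ℝ) → ℝ) (hg : MultilinearOn g)
    (hg01 : ∀ q : κ → ℝ, (∀ k, 0 ≤ q k ∧ q k ≤ 1) → 0 ≤ g q ∧ g q ≤ 1) :
    MultilinearOn (fun r : (ι ⊕ κ) → ℝ =>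
      f (Function.update (r ∘ Sum.inl) j₀ (g (r ∘ Sum.inr)))) := by
  intro r hr j
  set q : κ → ℝ := r ∘ Sum.inr with hq_def
  have hq : ∀ k, 0 ≤ q k ∧ q k ≤ 1 := fun k => hr (Sum.inr k)
  have hgq := hg01 q hq
  have key : ∀ c : ℝ, 0 ≤ c → c ≤ 1 →
      f (Function.update (r ∘ Sum.inl) j₀ c) =
        c * f (Function.update (r ∘ Sum.inl) j₀ 1) +
        (1 - c) * f (Function.update (r ∘ Sum.inl) j₀ 0) := by
    intro c hc0 hc1
    have hp : ∀ j, 0 ≤ (Function.update (r ∘ Sum.inl) j₀ c) j ∧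
        (Function.update (r ∘ Sum.inl) j₀ c) j ≤ 1 := by
      intro j
      rcases eq_or_ne j j₀ with h | h
      · subst h; simp [hc0, hc1]
      · rw [Function.update_of_ne h]; exact hr (Sum.inl j)
    have := hf _ hp j₀
    simpa [Function.update_idem] using this
  cases j with
  | inl i =>
    have hcl : ∀ v : ℝ, (Function.update r (Sum.inl i) v) ∘ Sum.inl =
        Function.update (r ∘ Sum.inl) i v := by
      intro v; ext x
      rcases eq_or_ne x i with h | h
      · subst h; simp
      · simp [Function.comp, Function.update_of_ne h,
          Function.update_of_ne (fun hc => h (Sum.inl.inj hc))]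
    have hcr : ∀ v : ℝ, (Function.update r (Sum.inl i) v) ∘ Sum.inr = q := by
      intro v; ext x; simp [hq_def, Function.comp]
    by_cases hij : i = j₀
    · subst hij
      simp only [hcl, hcr, Function.update_idem]
      ring
    · have hp : ∀ j, 0 ≤ (Function.update (r ∘ Sum.inl) j₀ (g q)) j ∧
          (Function.update (r ∘ Sum.inl) j₀ (g q)) j ≤ 1 := by
        intro j
        rcases eq_or_ne j j₀ with h | h
        · subst h; simpa using hgq
        · rw [Function.update_of_ne h]; exact hr (Sum.inl j)
      have h := hf _ hp i
      simp only [hcl, hcr]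
      rw [Function.update_comm (Ne.symm hij), Function.update_comm (Ne.symm hij)] at h
      rw [Function.update_of_ne hij] at h
      exact h
  | inr k =>
    have hcl : ∀ v : ℝ, (Function.update r (Sum.inr k) v) ∘ Sum.inl = r ∘ Sum.inl := by
      intro v; ext x; simp [Function.comp]
    have hcr : ∀ v : ℝ, (Function.update r (Sum.inr k) v) ∘ Sum.inr =
        Function.update q k v := by
      intro v; ext x
      rcases eq_or_ne x k with h | h
      · subst h; simp
      · simp [hq_def, Function.comp, Function.update_of_ne h,
          Function.update_of_ne (fun hc => h (Sum.inr.inj hc))]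
    simp only [hcl, hcr]
    have hq1 : ∀ k', 0 ≤ (Function.update q k 1) k' ∧ (Function.update q k 1) k' ≤ 1 := by
      intro k'; rcases eq_or_ne k' k with h | h
      · subst h; simp
      · rw [Function.update_of_ne h]; exact hq k'
    have hq0 : ∀ k', 0 ≤ (Function.update q k 0) k' ∧ (Function.update q k 0) k' ≤ 1 := by
      intro k'; rcases eq_or_ne k' k with h | h
      · subst h; simp
      · rw [Function.update_of_ne h]; exact hq k'
    have hA := hg01 _ hq1
    have hB := hg01 _ hq0
    have hgk := hg q hq k
    rw [key _ hgq.1 hgq.2, key _ hA.1 hA.2, key _ hB.1 hB.2, hgk]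
    simp only [hq_def, Function.comp_apply]
    ring
end

section
/- The Groves mechanism with h ≡ 0 is not ex-post truthful under execution uncertainty. Concretely, let N = Fin 2 (agents 0 and 1) and T = Fin 2 (allocations τ = 0 and τ' = 1), with true types: v₀ τ p = 0 for all τ, p and p₀ τ = 0 for all τ; v₁ 0 p = p 0 * p 1, v₁ 1 p = p 1, p₁ 0 = 1 and p₁ 1 = 1/2. Then, for every efficient-on-reports allocation choice π*: if both agents report truthfully, the chosen allocation is τ' = 1 and agent 0's Groves utility GU₀ equals 1/2; whereas if agent 0 reports the same valuation but the PoS report p̂₀ with p̂₀ 0 = 3/5 and p̂₀ 1 = 0 (agent 1 truthful), the chosen allocation is τ = 0 and agent 0's Groves utility equals 3/5 > 1/2, so agent 0 strictly gains by misreporting. -/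
/-- Reported social welfare of allocation `τ` under a reported profile. -/
def RSW {N T : Type*} [Fintype N] (θhat : N → AgentType N T) (τ : T) : ℝ :=
  ∑ i, (θhat i).v τ (fun j => (θhat j).p τ)

/-- Agent `i`'s utility in the Groves mechanism with `h ≡ 0`: her true expected
valuation of the chosen allocation (at the true PoS profile) plus the reported
expected welfare of the others (at the reported PoS profile). -/
def GrovesU {N T : Type*} [Fintype N] [DecidableEq N]
    (π : (N → AgentType N T) → T) (θ θhat : N → AgentType N T) (i : N) : ℝ :=
  let τ := π θhat
  (θ i).v τ (fun j => (θ j).p τ) +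
    ∑ j ∈ Finset.univ.erase i, (θhat j).v τ (fun k => (θhat k).p τ)

/-- Agent 0's true type: zero valuation and zero PoS everywhere. -/
noncomputable def agent0 : AgentType (Fin 2) (Fin 2) :=
  ⟨fun _ _ => 0, fun _ => 0, by intro τ; norm_num⟩

/-- Agent 1's true type: `v₁ 0 p = p 0 * p 1`, `v₁ 1 p = p 1`; `p₁ 0 = 1`,
`p₁ 1 = 1/2`. -/
noncomputable def agent1 : AgentType (Fin 2) (Fin 2) :=
  ⟨fun τ p => if τ = 0 then p 0 * p 1 else p 1,
   fun τ => if τ = 0 then 1 else 1 / 2,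
   by intro τ; by_cases h : τ = 0 <;> simp [h] <;> norm_num⟩

/-- The true type profile. -/
noncomputable def trueProfile : Fin 2 → AgentType (Fin 2) (Fin 2) :=
  fun i => if i = 0 then agent0 else agent1

/-- Agent 0's misreport: the same (zero) valuation, but PoS report
`p̂₀ 0 = 3/5`, `p̂₀ 1 = 0`. -/
noncomputable def agent0Mis : AgentType (Fin 2) (Fin 2) :=
  ⟨fun _ _ => 0, fun τ => if τ = 0 then 3 / 5 else 0,
   by intro τ; by_cases h : τ = 0 <;> simp [h] <;> norm_num⟩

/-- the Groves mechanism with `h ≡ 0` is not ex-post truthful under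
execution uncertainty: for every efficient-on-reports allocation choice `π*`, under
truthful reports allocation `1` is chosen and agent 0's Groves utility is `1/2`,
while misreporting `agent0Mis` makes allocation `0` chosen with Groves utility
`3/5 > 1/2`. -/
theorem groves_not_ex_post_truthful
    (π : (Fin 2 → AgentType (Fin 2) (Fin 2)) → Fin 2)
    (hπ : ∀ θhat τ, RSW θhat τ ≤ RSW θhat (π θhat)) :
    (π trueProfile = 1 ∧ GrovesU π trueProfile trueProfile 0 = 1 / 2) ∧
    (π (Function.update trueProfile 0 agent0Mis) = 0 ∧
      GrovesU π trueProfile (Function.update trueProfile 0 agent0Mis) 0 = 3 / 5 ∧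
      (1 / 2 : ℝ) < 3 / 5) := by
  have two : ∀ a : Fin 2, a = 0 ∨ a = 1 := by decide
  have R0 : RSW trueProfile 0 = 0 := by
    simp [RSW, Fin.sum_univ_two, trueProfile, agent0, agent1]
  have R1 : RSW trueProfile 1 = 1 / 2 := by
    simp [RSW, Fin.sum_univ_two, trueProfile, agent0, agent1]
  have M0 : RSW (Function.update trueProfile 0 agent0Mis) 0 = 3 / 5 := by
    simp [RSW, Fin.sum_univ_two, trueProfile, agent0, agent1, agent0Mis,
      Function.update]
  have M1 : RSW (Function.update trueProfile 0 agent0Mis) 1 = 1 / 2 := by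
    simp [RSW, Fin.sum_univ_two, trueProfile, agent0, agent1, agent0Mis,
      Function.update]
  have hT : π trueProfile = 1 := by
    rcases two (π trueProfile) with h | h
    · exfalso; have := hπ trueProfile 1; rw [h, R0, R1] at this; linarith
    · exact h
  have hM : π (Function.update trueProfile 0 agent0Mis) = 0 := by
    rcases two (π (Function.update trueProfile 0 agent0Mis)) with h | h
    · exact h
    · exfalso; have := hπ (Function.update trueProfile 0 agent0Mis) 0
      rw [h, M0, M1] at this; linarith
  refine ⟨⟨hT, ?_⟩, hM, ?_, by norm_num⟩
  · simp [GrovesU, hT, trueProfile, agent0, agent1, Finset.sum_erase_eq_sub,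
      Fin.sum_univ_two]
  · unfold GrovesU
    rw [hM]
    simp [trueProfile, agent0, agent1, agent0Mis, Function.update,
      Finset.sum_erase_eq_sub, Fin.sum_univ_two]
end
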